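/- arXiv:2204.09560 — 2 statements merged into one kernel-verified Lean document; each statement's English description precedes it below -/
import Mathlib

section
/- Let Φ : X → ℝ^d be a bounded measurable feature map on a probability space (X, P), let M = E[Φ(x)Φ(x)ᵀ], and fix ε > 0 such that ε² is not an eigenvalue of M. If x₁, x₂, … are i.i.d. samples from P and Φₙ is the n×d matrix with rows Φ(xᵢ), then the number of singular values of (1/√n)Φₙ exceeding ε converges almost surely to the number of eigenvalues of M exceeding ε². -/
open Matrix MeasureTheory ProbabilityTheory Filter Finset
open Polynomial Topology

/-- The ε-thresholded singular value count of a real n×d matrix: the number of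
singular values (square roots of eigenvalues of ΦᵀΦ) exceeding ε. -/
noncomputable def svCount {n d : ℕ} (Φ : Matrix (Fin n) (Fin d) ℝ) (ε : ℝ) : ℕ :=
  (Finset.univ.filter fun i : Fin d =>
    ε < Real.sqrt ((Matrix.isHermitian_conjTranspose_mul_self Φ).eigenvalues i)).card


variable {d : ℕ}

lemma aeval_conj (U D : Matrix (Fin d) (Fin d) ℝ) (h2 : U * star U = 1)
    (h1 : star U * U = 1) (p : ℝ[X]) :
    aeval (U * D * star U) p = U * aeval D p * star U := by
  have hpow : ∀ k : ℕ, (U * D * star U) ^ k = U * D ^ k * star U := by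
    intro k
    induction k with
    | zero => simp [h2]
    | succ k ih =>
      rw [pow_succ, ih, pow_succ]
      calc U * D ^ k * star U * (U * D * star U)
          = U * D ^ k * (star U * U) * (D * star U) := by
            simp only [Matrix.mul_assoc]
        _ = U * (D ^ k * D) * star U := by rw [h1, Matrix.mul_one]; simp only [Matrix.mul_assoc]
  rw [aeval_eq_sum_range, aeval_eq_sum_range]
  simp only [hpow]
  rw [Finset.mul_sum, Finset.sum_mul]
  congr 1
  ext k
  rw [mul_smul_comm, smul_mul_assoc]

lemma aeval_diag (v : Fin d → ℝ) (p : ℝ[X]) :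
    aeval (diagonal v) p = diagonal (fun i => p.eval (v i)) := by
  have h := Polynomial.aeval_algHom_apply (Matrix.diagonalAlgHom ℝ (n := Fin d) (α := ℝ)) v p
  simp only [Matrix.diagonalAlgHom_apply] at h
  have h2 : ((aeval v) p) = fun i => p.eval (v i) := by
    funext i
    rw [Polynomial.aeval_fn_apply, Polynomial.aeval_def, Polynomial.eval₂_eq_eval_map,
      show algebraMap ℝ ℝ = RingHom.id ℝ from rfl, Polynomial.map_id]
  rw [h, h2]

lemma trace_aeval_eig (B : Matrix (Fin d) (Fin d) ℝ) (hB : B.IsHermitian) (p : ℝ[X]) :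
    (aeval B p).trace = ∑ i, p.eval (hB.eigenvalues i) := by
  have hU := Matrix.mem_unitaryGroup_iff.mp (hB.eigenvectorUnitary).2
  have hU' := Matrix.mem_unitaryGroup_iff'.mp (hB.eigenvectorUnitary).2
  conv_lhs => rw [hB.spectral_theorem, Unitary.conjStarAlgAut_apply]
  rw [aeval_conj _ _ hU hU', Matrix.trace_mul_cycle, hU', Matrix.one_mul]
  have : (RCLike.ofReal ∘ hB.eigenvalues : Fin d → ℝ) = hB.eigenvalues := by
    ext i; simp
  rw [this, aeval_diag, Matrix.trace_diagonal]

section G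
/-- ramp function -/
noncomputable def gfun (a δ : ℝ) : ℝ → ℝ := fun x => min 1 (max ((x - a)/δ) 0)

lemma gfun_cont (a δ : ℝ) : Continuous (gfun a δ) :=
  continuous_const.min (((continuous_id.sub continuous_const).div_const δ).max continuous_const)

lemma gfun_nonneg (a δ x : ℝ) : 0 ≤ gfun a δ x :=
  le_min one_pos.le (le_max_right _ _)

lemma gfun_le_one (a δ x : ℝ) : gfun a δ x ≤ 1 := min_le_left _ _

lemma gfun_eq_one {a δ x : ℝ} (hδ : 0 < δ) (h : a + δ ≤ x) : gfun a δ x = 1 := by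
  have h1 : (1:ℝ) ≤ (x - a)/δ := by
    rw [le_div_iff₀ hδ]; linarith
  exact min_eq_left (le_max_of_le_left h1)

lemma gfun_eq_zero {a δ x : ℝ} (hδ : 0 < δ) (h : x ≤ a) : gfun a δ x = 0 := by
  have h1 : (x - a)/δ ≤ 0 := div_nonpos_of_nonpos_of_nonneg (by linarith) hδ.le
  rw [gfun, max_eq_right h1]
  exact min_eq_right zero_le_one
end G

lemma eig_sq_le {d : ℕ} (B : Matrix (Fin d) (Fin d) ℝ) (hB : B.IsHermitian) (i : Fin d) :
    (hB.eigenvalues i)^2 ≤ ∑ j, ∑ k, (B j k)^2 := by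
  have h := trace_aeval_eig B hB (X^2)
  simp only [map_pow, aeval_X, eval_pow, eval_X] at h
  have h2 : (B^2).trace = ∑ j, ∑ k, (B j k)^2 := by
    rw [pow_two, Matrix.trace]
    simp only [Matrix.diag, Matrix.mul_apply]
    apply Finset.sum_congr rfl
    intro j _
    apply Finset.sum_congr rfl
    intro k _
    have := hB.apply j k
    rw [star_trivial] at this
    rw [← this, ← pow_two]
  rw [h2] at h
  rw [h]
  exact Finset.single_le_sum (f := fun j => hB.eigenvalues j ^ 2)
    (fun j _ => sq_nonneg _) (Finset.mem_univ i)

lemma count_eig_eventually_eq {d : ℕ} (B : ℕ → Matrix (Fin d) (Fin d) ℝ)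
    (hB : ∀ n, (B n).IsHermitian) {M : Matrix (Fin d) (Fin d) ℝ} (hM : M.IsHermitian)
    (t : ℝ) (hne : ∀ i, hM.eigenvalues i ≠ t)
    (hconv : ∀ i j, Tendsto (fun n => B n i j) atTop (𝓝 (M i j))) :
    ∀ᶠ n in atTop, (Finset.univ.filter fun i => t < (hB n).eigenvalues i).card
      = (Finset.univ.filter fun i => t < hM.eigenvalues i).card := by
  rcases Nat.eq_zero_or_pos d with hd | hd
  · subst hd
    exact Eventually.of_forall fun n => by simp
  have hd' : Nonempty (Fin d) := ⟨⟨0, hd⟩⟩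
  set S : ℝ := ∑ j, ∑ k, (M j k)^2 with hS
  have hSnonneg : 0 ≤ S := Finset.sum_nonneg fun j _ => Finset.sum_nonneg fun k _ => sq_nonneg _
  have hScont : Tendsto (fun n => ∑ j, ∑ k, (B n j k)^2) atTop (𝓝 S) := by
    apply tendsto_finset_sum
    intro j _
    apply tendsto_finset_sum
    intro k _
    exact ((continuous_pow 2).tendsto _).comp (hconv j k)
  have hSev : ∀ᶠ n in atTop, ∑ j, ∑ k, (B n j k)^2 ≤ S + 1 :=
    (hScont.eventually_lt_const (lt_add_one S)).mono fun n h => h.le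
  set K : ℝ := Real.sqrt (S + 1) with hK
  have hK2 : K^2 = S + 1 := Real.sq_sqrt (by positivity)
  have hKnonneg : 0 ≤ K := Real.sqrt_nonneg _
  have heigBound : ∀ (A : Matrix (Fin d) (Fin d) ℝ) (hA : A.IsHermitian),
      (∑ j, ∑ k, (A j k)^2 ≤ S + 1) → ∀ i, hA.eigenvalues i ∈ Set.Icc (-K) K := by
    intro A hA hAS i
    have h1 : (hA.eigenvalues i)^2 ≤ K^2 := (eig_sq_le A hA i).trans (hK2 ▸ hAS)
    have h2 := Real.sqrt_le_sqrt h1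
    rw [Real.sqrt_sq_eq_abs, Real.sqrt_sq hKnonneg] at h2
    exact abs_le.1 h2
  have hMbound : ∀ i, hM.eigenvalues i ∈ Set.Icc (-K) K :=
    heigBound M hM (by linarith)
  set δ : ℝ := Finset.univ.inf' Finset.univ_nonempty fun i => |hM.eigenvalues i - t| with hδdef
  have hδpos : 0 < δ := by
    rw [hδdef, Finset.lt_inf'_iff]
    intro i _
    exact abs_pos.2 (sub_ne_zero.2 (hne i))
  have hδle : ∀ i, δ ≤ |hM.eigenvalues i - t| := fun i =>
    Finset.inf'_le _ (Finset.mem_univ i)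
  set η : ℝ := 1 / (2 * (d:ℝ) + 2) with hη
  have hηpos : 0 < η := by positivity
  have h2d2 : (0:ℝ) < 2 * (d:ℝ) + 2 := by positivity
  have hdη : 2 * (d:ℝ) * η < 1 := by
    rw [hη, mul_one_div, div_lt_one h2d2]
    linarith
  have hcast : ∀ (f : Fin d → ℝ),
      ((Finset.univ.filter fun i => t < f i).card : ℝ) = ∑ i, if t < f i then (1:ℝ) else 0 := by
    intro f
    rw [Finset.sum_boole]
  -- upper bound polynomial
  obtain ⟨q₁, hq₁⟩ := exists_polynomial_near_of_continuousOn (-K) K (gfun (t - δ) δ)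
    (gfun_cont _ _).continuousOn η hηpos
  set p₁ : ℝ[X] := q₁ + Polynomial.C η with hp₁
  have hp₁ge : ∀ x ∈ Set.Icc (-K) K, (if t < x then (1:ℝ) else 0) ≤ p₁.eval x := by
    intro x hx
    have h1 := abs_lt.1 (hq₁ x hx)
    have h2 : gfun (t - δ) δ x ≤ p₁.eval x := by
      rw [hp₁]; simp only [eval_add, eval_C]
      linarith [h1.1]
    refine le_trans ?_ h2
    by_cases h : t < x
    · rw [if_pos h, gfun_eq_one hδpos (by linarith)]
    · rw [if_neg h]; exact gfun_nonneg _ _ _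
  have hgM₁ : ∀ i, gfun (t - δ) δ (hM.eigenvalues i)
      = (if t < hM.eigenvalues i then (1:ℝ) else 0) := by
    intro i
    by_cases h : t < hM.eigenvalues i
    · rw [if_pos h, gfun_eq_one hδpos]
      have h3 := hδle i
      rw [abs_of_pos (by linarith)] at h3
      linarith
    · rw [if_neg h]
      apply gfun_eq_zero hδpos
      have h3 := hδle i
      have h4 : hM.eigenvalues i < t := lt_of_le_of_ne (not_lt.1 h) (hne i)
      rw [abs_of_neg (by linarith)] at h3
      linarith
  have hgM₂ : ∀ i, gfun t δ (hM.eigenvalues i)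
      = (if t < hM.eigenvalues i then (1:ℝ) else 0) := by
    intro i
    by_cases h : t < hM.eigenvalues i
    · rw [if_pos h]
      apply gfun_eq_one hδpos
      have h3 := hδle i
      rw [abs_of_pos (by linarith)] at h3
      linarith
    · rw [if_neg h]
      exact gfun_eq_zero hδpos (not_lt.1 h)
  have hp₁M : ∑ i, p₁.eval (hM.eigenvalues i)
      < ((Finset.univ.filter fun i => t < hM.eigenvalues i).card : ℝ) + 1 := by
    have hterm : ∀ i, p₁.eval (hM.eigenvalues i)
        ≤ (if t < hM.eigenvalues i then (1:ℝ) else 0) + 2*η := by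
      intro i
      have h1 := abs_lt.1 (hq₁ _ (hMbound i))
      rw [hp₁]; simp only [eval_add, eval_C]
      rw [← hgM₁ i]
      linarith [h1.2]
    calc ∑ i, p₁.eval (hM.eigenvalues i)
        ≤ ∑ i, ((if t < hM.eigenvalues i then (1:ℝ) else 0) + 2*η) :=
          Finset.sum_le_sum fun i _ => hterm i
      _ = ((Finset.univ.filter fun i => t < hM.eigenvalues i).card : ℝ) + (d:ℝ) * (2*η) := by
          rw [Finset.sum_add_distrib, ← hcast hM.eigenvalues, Finset.sum_const,
            Finset.card_univ, Fintype.card_fin, nsmul_eq_mul]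
      _ < _ + 1 := by
          have h5 : (d:ℝ) * (2*η) = 2 * (d:ℝ) * η := by ring
          rw [h5]
          linarith
  -- lower bound polynomial
  obtain ⟨q₂, hq₂⟩ := exists_polynomial_near_of_continuousOn (-K) K (gfun t δ)
    (gfun_cont _ _).continuousOn η hηpos
  set p₂ : ℝ[X] := q₂ - Polynomial.C η with hp₂
  have hp₂le : ∀ x ∈ Set.Icc (-K) K, p₂.eval x ≤ (if t < x then (1:ℝ) else 0) := by
    intro x hx
    have h1 := abs_lt.1 (hq₂ x hx)
    have h2 : p₂.eval x ≤ gfun t δ x := by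
      rw [hp₂]; simp only [eval_sub, eval_C]
      linarith [h1.2]
    refine h2.trans ?_
    by_cases h : t < x
    · rw [if_pos h]; exact gfun_le_one _ _ _
    · rw [if_neg h, gfun_eq_zero hδpos (not_lt.1 h)]
  have hp₂M : ((Finset.univ.filter fun i => t < hM.eigenvalues i).card : ℝ) - 1
      < ∑ i, p₂.eval (hM.eigenvalues i) := by
    have hterm : ∀ i, (if t < hM.eigenvalues i then (1:ℝ) else 0) - 2*η
        ≤ p₂.eval (hM.eigenvalues i) := by
      intro i
      have h1 := abs_lt.1 (hq₂ _ (hMbound i))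
      rw [hp₂]; simp only [eval_sub, eval_C]
      rw [← hgM₂ i]
      linarith [h1.1]
    calc ((Finset.univ.filter fun i => t < hM.eigenvalues i).card : ℝ) - 1
        < ((Finset.univ.filter fun i => t < hM.eigenvalues i).card : ℝ) - (d:ℝ)*(2*η) := by
          have h5 : (d:ℝ) * (2*η) = 2 * (d:ℝ) * η := by ring
          rw [h5]; linarith
      _ = ∑ i, ((if t < hM.eigenvalues i then (1:ℝ) else 0) - 2*η) := by
          rw [Finset.sum_sub_distrib, ← hcast hM.eigenvalues, Finset.sum_const,
            Finset.card_univ, Fintype.card_fin, nsmul_eq_mul]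
      _ ≤ ∑ i, p₂.eval (hM.eigenvalues i) := Finset.sum_le_sum fun i _ => hterm i
  -- convergence of traces
  have htr : ∀ p : ℝ[X], Tendsto (fun n => (aeval (B n) p).trace) atTop
      (𝓝 ((aeval M p).trace)) := by
    intro p
    have hBconv : Tendsto B atTop (𝓝 M) := by
      refine tendsto_pi_nhds.2 ?_
      intro j
      rw [tendsto_pi_nhds]
      intro k
      exact hconv j k
    have hcont : Continuous fun A : Matrix (Fin d) (Fin d) ℝ => (aeval A p).trace := by
      have h1 : Continuous fun A : Matrix (Fin d) (Fin d) ℝ => Matrix.trace A :=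
        continuous_finset_sum _ fun i _ => (continuous_apply i).comp (continuous_apply i)
      exact h1.comp p.continuous_aeval
    exact (hcont.tendsto M).comp hBconv
  have hev₁ : ∀ᶠ n in atTop, (aeval (B n) p₁).trace
      < ((Finset.univ.filter fun i => t < hM.eigenvalues i).card : ℝ) + 1 := by
    have h6 := htr p₁
    rw [trace_aeval_eig M hM p₁] at h6
    exact h6.eventually_lt_const hp₁M
  have hev₂ : ∀ᶠ n in atTop,
      ((Finset.univ.filter fun i => t < hM.eigenvalues i).card : ℝ) - 1
      < (aeval (B n) p₂).trace := by
    have h6 := htr p₂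
    rw [trace_aeval_eig M hM p₂] at h6
    exact h6.eventually_const_lt hp₂M
  filter_upwards [hSev, hev₁, hev₂] with n hn h₁ h₂
  have hbound := heigBound (B n) (hB n) hn
  have hub : ((Finset.univ.filter fun i => t < (hB n).eigenvalues i).card : ℝ)
      < ((Finset.univ.filter fun i => t < hM.eigenvalues i).card : ℝ) + 1 := by
    rw [hcast ((hB n).eigenvalues)]
    calc (∑ i, if t < (hB n).eigenvalues i then (1:ℝ) else 0)
        ≤ ∑ i, p₁.eval ((hB n).eigenvalues i) :=
          Finset.sum_le_sum fun i _ => hp₁ge _ (hbound i)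
      _ = (aeval (B n) p₁).trace := (trace_aeval_eig (B n) (hB n) p₁).symm
      _ < _ := h₁
  have hlb : ((Finset.univ.filter fun i => t < hM.eigenvalues i).card : ℝ) - 1
      < ((Finset.univ.filter fun i => t < (hB n).eigenvalues i).card : ℝ) := by
    rw [hcast ((hB n).eigenvalues)]
    calc ((Finset.univ.filter fun i => t < hM.eigenvalues i).card : ℝ) - 1
        < (aeval (B n) p₂).trace := h₂
      _ = ∑ i, p₂.eval ((hB n).eigenvalues i) := trace_aeval_eig (B n) (hB n) p₂
      _ ≤ ∑ i, if t < (hB n).eigenvalues i then (1:ℝ) else 0 :=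
          Finset.sum_le_sum fun i _ => hp₂le _ (hbound i)
  have h7 : (Finset.univ.filter fun i => t < (hB n).eigenvalues i).card
      < (Finset.univ.filter fun i => t < hM.eigenvalues i).card + 1 := by
    have h9 : (((Finset.univ.filter fun i => t < (hB n).eigenvalues i).card : ℕ) : ℝ)
        < ((((Finset.univ.filter fun i => t < hM.eigenvalues i).card + 1 : ℕ)) : ℝ) := by
      push_cast
      linarith
    exact_mod_cast h9
  have h8 : (Finset.univ.filter fun i => t < hM.eigenvalues i).card
      < (Finset.univ.filter fun i => t < (hB n).eigenvalues i).card + 1 := by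
    have h9 : (((Finset.univ.filter fun i => t < hM.eigenvalues i).card : ℕ) : ℝ)
        < ((((Finset.univ.filter fun i => t < (hB n).eigenvalues i).card + 1 : ℕ)) : ℝ) := by
      push_cast
      linarith
    exact_mod_cast h9
  omega

/-- Consistency of the estimated feature rank: for a bounded measurable
feature map Φ with second-moment matrix M = E[Φ(x)Φ(x)ᵀ], if ε² is not an eigenvalue
of M and x₁, x₂, … are i.i.d. samples from P, then the number of singular values of
(1/√n)Φₙ exceeding ε converges a.s. to the number of eigenvalues of M exceeding ε². -/
theorem feature_rank_estimator_consistent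
    {d : ℕ} {X Ω : Type*} [MeasurableSpace X] [MeasurableSpace Ω]
    (P : Measure X) [IsProbabilityMeasure P] (μ : Measure Ω) [IsProbabilityMeasure μ]
    (Φ : X → Fin d → ℝ) (hΦmeas : Measurable Φ)
    (C : ℝ) (hbound : ∀ x i, |Φ x i| ≤ C)
    (M : Matrix (Fin d) (Fin d) ℝ) (hMdef : ∀ i j, M i j = ∫ x, Φ x i * Φ x j ∂P)
    (hM : M.IsHermitian)
    (ε : ℝ) (hε : 0 < ε) (hne : ∀ i, hM.eigenvalues i ≠ ε ^ 2)
    (ξ : ℕ → Ω → X) (hξmeas : ∀ n, Measurable (ξ n))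
    (hindep : iIndepFun ξ μ)
    (hlaw : ∀ n, Measure.map (ξ n) μ = P) :
    ∀ᵐ ω ∂μ, Tendsto
      (fun n : ℕ => svCount
        ((Real.sqrt (n : ℝ))⁻¹ • Matrix.of (fun (i : Fin n) (j : Fin d) => Φ (ξ i ω) j)) ε)
      atTop (nhds ((Finset.univ.filter fun i => ε ^ 2 < hM.eigenvalues i).card)) := by
  classical
  have hSLLN : ∀ i j : Fin d, ∀ᵐ ω ∂μ, Tendsto
      (fun n : ℕ => (∑ k ∈ Finset.range n, Φ (ξ k ω) i * Φ (ξ k ω) j) / n)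
      atTop (𝓝 (M i j)) := by
    intro i j
    set g : X → ℝ := fun x => Φ x i * Φ x j with hg
    have hgmeas : Measurable g :=
      ((measurable_pi_apply i).comp hΦmeas).mul ((measurable_pi_apply j).comp hΦmeas)
    have hgbound : ∀ x, ‖g x‖ ≤ C * C := by
      intro x
      rw [hg]
      calc ‖Φ x i * Φ x j‖ = |Φ x i| * |Φ x j| := abs_mul _ _
        _ ≤ C * C := by
            have h1 := hbound x i
            have h2 := hbound x j
            have h0 : (0:ℝ) ≤ |Φ x i| := abs_nonneg _
            nlinarith [abs_nonneg (Φ x j)]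
    have hint : Integrable (fun ω => g (ξ 0 ω)) μ :=
      ⟨(hgmeas.comp (hξmeas 0)).aestronglyMeasurable,
        HasFiniteIntegral.of_bounded (C := C * C) (Eventually.of_forall fun ω => hgbound _)⟩
    have hindep' : Pairwise (Function.onFun (IndepFun · · μ) fun k ω => g (ξ k ω)) := by
      intro k l hkl
      exact (hindep.indepFun hkl).comp hgmeas hgmeas
    have hident : ∀ k, IdentDistrib (fun ω => g (ξ k ω)) (fun ω => g (ξ 0 ω)) μ μ := by
      intro k
      refine ⟨(hgmeas.comp (hξmeas k)).aemeasurable, (hgmeas.comp (hξmeas 0)).aemeasurable, ?_⟩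
      show Measure.map (g ∘ ξ k) μ = Measure.map (g ∘ ξ 0) μ
      rw [← Measure.map_map hgmeas (hξmeas k), ← Measure.map_map hgmeas (hξmeas 0),
        hlaw k, hlaw 0]
    have h := strong_law_ae_real (fun k ω => g (ξ k ω)) hint hindep' hident
    have hexp : μ[fun ω => g (ξ 0 ω)] = M i j := by
      have h1 : ∫ ω, g (ξ 0 ω) ∂μ = ∫ x, g x ∂(Measure.map (ξ 0) μ) :=
        (integral_map (hξmeas 0).aemeasurable hgmeas.aestronglyMeasurable).symm
      rw [show μ[fun ω => g (ξ 0 ω)] = ∫ ω, g (ξ 0 ω) ∂μ from rfl, h1, hlaw 0, hMdef i j]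
    rw [hexp] at h
    exact h
  have hae : ∀ᵐ ω ∂μ, ∀ i j : Fin d, Tendsto
      (fun n : ℕ => (∑ k ∈ Finset.range n, Φ (ξ k ω) i * Φ (ξ k ω) j) / n)
      atTop (𝓝 (M i j)) :=
    ae_all_iff.2 fun i => ae_all_iff.2 fun j => hSLLN i j
  filter_upwards [hae] with ω hω
  set A : ∀ n : ℕ, Matrix (Fin n) (Fin d) ℝ :=
    fun n => (Real.sqrt (n : ℝ))⁻¹ • Matrix.of (fun (i : Fin n) (j : Fin d) => Φ (ξ i ω) j)
    with hA
  set B : ℕ → Matrix (Fin d) (Fin d) ℝ := fun n => (A n)ᵀ * (A n) with hBdef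
  have hBentry : ∀ (n : ℕ) (i j : Fin d),
      B n i j = (∑ k ∈ Finset.range n, Φ (ξ k ω) i * Φ (ξ k ω) j) / n := by
    intro n i j
    have h1 : B n i j = ∑ k : Fin n,
        ((Real.sqrt (n:ℝ))⁻¹ * Φ (ξ k ω) i) * ((Real.sqrt (n:ℝ))⁻¹ * Φ (ξ k ω) j) := by
      rw [hBdef]
      simp [Matrix.mul_apply, Matrix.transpose_apply, hA, Matrix.smul_apply, smul_eq_mul]
    rw [h1]
    have h2 : ∀ k : Fin n,
        ((Real.sqrt (n:ℝ))⁻¹ * Φ (ξ k ω) i) * ((Real.sqrt (n:ℝ))⁻¹ * Φ (ξ k ω) j)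
        = (Φ (ξ k ω) i * Φ (ξ k ω) j) / n := by
      intro k
      have h3 : (Real.sqrt (n:ℝ))⁻¹ * (Real.sqrt (n:ℝ))⁻¹ = ((n:ℝ))⁻¹ := by
        rw [← mul_inv]
        rw [Real.mul_self_sqrt (Nat.cast_nonneg n)]
      calc ((Real.sqrt (n:ℝ))⁻¹ * Φ (ξ k ω) i) * ((Real.sqrt (n:ℝ))⁻¹ * Φ (ξ k ω) j)
          = (Φ (ξ k ω) i * Φ (ξ k ω) j) * ((Real.sqrt (n:ℝ))⁻¹ * (Real.sqrt (n:ℝ))⁻¹) := by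
            ring
        _ = (Φ (ξ k ω) i * Φ (ξ k ω) j) * ((n:ℝ))⁻¹ := by rw [h3]
        _ = (Φ (ξ k ω) i * Φ (ξ k ω) j) / n := (div_eq_mul_inv _ _).symm
    rw [Finset.sum_congr rfl fun k _ => h2 k]
    rw [← Finset.sum_div]
    congr 1
    exact Fin.sum_univ_eq_sum_range (fun k => Φ (ξ k ω) i * Φ (ξ k ω) j) n
  have hconv : ∀ i j : Fin d, Tendsto (fun n => B n i j) atTop (𝓝 (M i j)) := by
    intro i j
    have := hω i j
    apply this.congr
    intro n
    rw [hBentry n i j]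
  have hev := count_eig_eventually_eq B (fun n => Matrix.isHermitian_conjTranspose_mul_self (A n))
    hM (ε^2) hne hconv
  have hsv : ∀ n : ℕ, svCount (A n) ε =
      (Finset.univ.filter fun i =>
        ε^2 < (Matrix.isHermitian_conjTranspose_mul_self (A n)).eigenvalues i).card := by
    intro n
    unfold svCount
    congr 1
    apply Finset.filter_congr
    intro i _
    rw [Real.lt_sqrt hε.le]
  apply Tendsto.congr' _ tendsto_const_nhds
  filter_upwards [hev] with n hn
  rw [hsv n]
  exact hn.symm
end

section
/- Let A = I - γP where P is a row-stochastic d×d matrix and 0 ≤ γ < 1, and let R ∈ ℝ^d, ε ∈ ℝ^k. Then the solution Φₜ = exp(-tA)(Φ₀ - A⁻¹Rεᵀ) + A⁻¹Rεᵀ of ∂ₜΦₜ = -AΦₜ + Rεᵀ converges as t → ∞ to the rank-at-most-one matrix (I - γP)⁻¹ R εᵀ. -/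
open Matrix Filter

lemma aux_norm_exp_le_exp_norm {𝔸 : Type*} [NormedRing 𝔸] [NormedAlgebra ℝ 𝔸]
    [CompleteSpace 𝔸] [NormOneClass 𝔸] (x : 𝔸) :
    ‖NormedSpace.exp x‖ ≤ Real.exp ‖x‖ := by
  rw [NormedSpace.exp_eq_tsum ℝ]
  refine (norm_tsum_le_tsum_norm (NormedSpace.norm_expSeries_summable' (𝕂 := ℝ) x)).trans ?_
  rw [Real.exp_eq_exp_ℝ, NormedSpace.exp_eq_tsum_div]
  refine Summable.tsum_le_tsum (fun n => ?_) (NormedSpace.norm_expSeries_summable' (𝕂 := ℝ) x)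
    (Real.summable_pow_div_factorial ‖x‖)
  rw [norm_smul, norm_inv, Real.norm_natCast, div_eq_inv_mul]
  gcongr
  exact norm_pow_le x n

/-- With A = I - γP (P row-stochastic, 0 ≤ γ < 1), the solution
Φₜ = exp(-tA)(Φ₀ - A⁻¹Rεᵀ) + A⁻¹Rεᵀ of ∂ₜΦₜ = -AΦₜ + Rεᵀ converges as t → ∞
(entrywise) to the rank-at-most-one matrix (I - γP)⁻¹Rεᵀ. -/
theorem td_features_converge_to_value_direction
    {d k : ℕ} (P : Matrix (Fin d) (Fin d) ℝ)
    (hP : ∀ i j, 0 ≤ P i j) (hrow : ∀ i, ∑ j, P i j = 1)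
    (γ : ℝ) (hγ0 : 0 ≤ γ) (hγ1 : γ < 1)
    (R : Fin d → ℝ) (ε : Fin k → ℝ) (Φ₀ : Matrix (Fin d) (Fin k) ℝ) :
    ∀ (i : Fin d) (j : Fin k),
      Tendsto (fun t : ℝ =>
        (NormedSpace.exp (-(t • ((1 : Matrix (Fin d) (Fin d) ℝ) - γ • P)))
            * (Φ₀ - ((1 : Matrix (Fin d) (Fin d) ℝ) - γ • P)⁻¹ * Matrix.vecMulVec R ε)
          + ((1 : Matrix (Fin d) (Fin d) ℝ) - γ • P)⁻¹ * Matrix.vecMulVec R ε) i j)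
        atTop
        (nhds ((((1 : Matrix (Fin d) (Fin d) ℝ) - γ • P)⁻¹ * Matrix.vecMulVec R ε) i j)) := by
  intro i j
  haveI : Nonempty (Fin d) := ⟨i⟩
  letI : SeminormedRing (Matrix (Fin d) (Fin d) ℝ) := Matrix.linftyOpSemiNormedRing
  letI : NormedRing (Matrix (Fin d) (Fin d) ℝ) := Matrix.linftyOpNormedRing
  letI : NormedAlgebra ℝ (Matrix (Fin d) (Fin d) ℝ) := Matrix.linftyOpNormedAlgebra
  haveI : NormOneClass (Matrix (Fin d) (Fin d) ℝ) := Matrix.linfty_opNormOneClass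
  set A : Matrix (Fin d) (Fin d) ℝ := 1 - γ • P with hA
  set C : Matrix (Fin d) (Fin k) ℝ := Φ₀ - A⁻¹ * Matrix.vecMulVec R ε with hC
  set D : Matrix (Fin d) (Fin k) ℝ := A⁻¹ * Matrix.vecMulVec R ε with hD
  -- entrywise bound by the L∞-operator norm
  have entry_le : ∀ (M : Matrix (Fin d) (Fin d) ℝ) (a b : Fin d), |M a b| ≤ ‖M‖ := by
    intro M a b
    rw [Matrix.linfty_opNorm_def]
    calc |M a b| = ‖M a b‖ := (Real.norm_eq_abs _).symm
      _ ≤ ((∑ j', ‖M a j'‖₊ : NNReal) : ℝ) := by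
          push_cast
          exact Finset.single_le_sum (f := fun j' => ‖M a j'‖)
            (fun _ _ => norm_nonneg _) (Finset.mem_univ b)
      _ ≤ _ := NNReal.coe_le_coe.mpr (Finset.le_sup (f := fun r => ∑ j', ‖M r j'‖₊) (Finset.mem_univ a))
  -- norm of P is at most 1
  have hPnorm : ‖P‖ ≤ 1 := by
    have h1 : ‖P‖₊ ≤ 1 := by
      rw [Matrix.linfty_opNNNorm_def]
      refine Finset.sup_le fun a _ => ?_
      have hcoe : ((∑ j', ‖P a j'‖₊ : NNReal) : ℝ) = 1 := by
        push_cast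
        rw [← hrow a]
        exact Finset.sum_congr rfl fun j' _ => by
          rw [Real.norm_eq_abs, abs_of_nonneg (hP a j')]
      exact le_of_eq (NNReal.coe_injective (by rw [hcoe, NNReal.coe_one]))
    calc ‖P‖ = ((‖P‖₊ : NNReal) : ℝ) := (coe_nnnorm P).symm
      _ ≤ 1 := by exact_mod_cast h1
  -- the matrix exponential bound
  have hbound : ∀ t : ℝ, 0 ≤ t →
      ‖NormedSpace.exp (-(t • A))‖ ≤ Real.exp (-((1 - γ) * t)) := by
    intro t ht
    have hsplit : -(t • A) = (-t) • (1 : Matrix (Fin d) (Fin d) ℝ) + (t * γ) • P := by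
      rw [hA]; module
    have hcomm : Commute ((-t) • (1 : Matrix (Fin d) (Fin d) ℝ)) ((t * γ) • P) :=
      ((Commute.one_left _).smul_left _).smul_right _
    have hexp1 : NormedSpace.exp ((-t) • (1 : Matrix (Fin d) (Fin d) ℝ))
        = Real.exp (-t) • (1 : Matrix (Fin d) (Fin d) ℝ) := by
      rw [← Algebra.algebraMap_eq_smul_one]
      have := NormedSpace.algebraMap_exp_comm (𝕂 := ℝ) (𝔸 := Matrix (Fin d) (Fin d) ℝ) (-t)
      rw [← Real.exp_eq_exp_ℝ] at this
      exact this.symm.trans (Algebra.algebraMap_eq_smul_one _)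
    rw [hsplit, Matrix.exp_add_of_commute _ _ hcomm, hexp1, smul_mul_assoc, one_mul,
      norm_smul, Real.norm_eq_abs, Real.abs_exp]
    have h2 : ‖NormedSpace.exp ((t * γ) • P)‖ ≤ Real.exp (t * γ) := by
      refine (aux_norm_exp_le_exp_norm _).trans (Real.exp_le_exp.mpr ?_)
      rw [norm_smul, Real.norm_eq_abs, abs_of_nonneg (mul_nonneg ht hγ0)]
      calc t * γ * ‖P‖ ≤ t * γ * 1 := by
            exact mul_le_mul_of_nonneg_left hPnorm (mul_nonneg ht hγ0)
        _ = t * γ := mul_one _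
    calc Real.exp (-t) * ‖NormedSpace.exp ((t * γ) • P)‖
        ≤ Real.exp (-t) * Real.exp (t * γ) :=
          mul_le_mul_of_nonneg_left h2 (Real.exp_nonneg _)
      _ = Real.exp (-((1 - γ) * t)) := by rw [← Real.exp_add]; ring_nf
  -- entrywise convergence of the exponential to zero
  have h0 : ∀ a b : Fin d,
      Tendsto (fun t : ℝ => NormedSpace.exp (-(t • A)) a b) atTop (nhds 0) := by
    intro a b
    refine squeeze_zero_norm' (a := fun t => Real.exp (-((1 - γ) * t))) ?_ ?_
    · filter_upwards [eventually_ge_atTop (0 : ℝ)] with t ht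
      exact (entry_le _ a b).trans (hbound t ht)
    · have hlin : Tendsto (fun t : ℝ => (1 - γ) * t) atTop atTop :=
        Tendsto.const_mul_atTop (by linarith) tendsto_id
      exact Real.tendsto_exp_neg_atTop_nhds_zero.comp hlin
  -- put everything together
  have key : Tendsto (fun t : ℝ =>
      ∑ l, NormedSpace.exp (-(t • A)) i l * C l j + D i j) atTop
      (nhds (∑ l : Fin d, (0 : ℝ) * C l j + D i j)) :=
    (tendsto_finset_sum _ fun l _ => (h0 i l).mul_const (C l j)).add tendsto_const_nhds
  simp only [zero_mul, Finset.sum_const_zero, zero_add] at key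
  simpa only [Matrix.add_apply, Matrix.mul_apply] using key
end
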